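/- arXiv:0906.0107 — 5 statements merged into one kernel-verified Lean document; each statement's English description precedes it below -/
import Mathlib

section
/- The function v₁(t) = ∫_ℝ dτ / √((1+τ²)(1+(t-τ)²)) is well-defined (the integral converges) for every real t, and v₁(t) ≤ v₁(0) = π for all t ≥ 0. -/
open MeasureTheory

noncomputable def v1 (t : ℝ) : ℝ :=
  ∫ τ : ℝ, (Real.sqrt ((1 + τ ^ 2) * (1 + (t - τ) ^ 2)))⁻¹

lemma v1_cont (t : ℝ) :
    Continuous fun τ : ℝ => (Real.sqrt ((1 + τ ^ 2) * (1 + (t - τ) ^ 2)))⁻¹ := by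
  apply Continuous.inv₀
  · continuity
  · intro τ
    rw [Real.sqrt_ne_zero']
    positivity

lemma v1_shift_int (t : ℝ) : Integrable (fun τ : ℝ => (1 + (t - τ) ^ 2)⁻¹) := by
  have h1 : Integrable (fun τ : ℝ => (1 + (-τ) ^ 2)⁻¹) := by
    simpa using integrable_inv_one_add_sq.comp_neg (f := fun x : ℝ => (1 + x ^ 2)⁻¹)
  have h2 := h1.comp_sub_right t
  convert h2 using 2 with τ
  ring_nf

lemma v1_integrable (t : ℝ) :
    Integrable (fun τ : ℝ => (Real.sqrt ((1 + τ ^ 2) * (1 + (t - τ) ^ 2)))⁻¹) := by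
  have hbound : Integrable (fun τ : ℝ => ((1 + τ ^ 2)⁻¹ + (1 + (t - τ) ^ 2)⁻¹) / 2) :=
    (integrable_inv_one_add_sq.add (v1_shift_int t)).div_const 2
  refine hbound.mono' (v1_cont t).aestronglyMeasurable ?_
  filter_upwards with τ
  set a : ℝ := 1 + τ ^ 2 with ha
  set b : ℝ := 1 + (t - τ) ^ 2 with hb
  have han : (0:ℝ) < a := by positivity
  have hbn : (0:ℝ) < b := by positivity
  rw [Real.norm_of_nonneg (by positivity)]
  rw [← Real.sqrt_inv, mul_inv, Real.sqrt_mul (by positivity)]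
  have h1 := Real.sq_sqrt (le_of_lt (inv_pos.mpr han))
  have h2 := Real.sq_sqrt (le_of_lt (inv_pos.mpr hbn))
  nlinarith [sq_nonneg (Real.sqrt a⁻¹ - Real.sqrt b⁻¹)]

lemma v1_zero : v1 0 = Real.pi := by
  have : ∀ τ : ℝ, (Real.sqrt ((1 + τ ^ 2) * (1 + (0 - τ) ^ 2)))⁻¹ = (1 + τ ^ 2)⁻¹ := by
    intro τ
    have : (1 + τ ^ 2) * (1 + (0 - τ) ^ 2) = (1 + τ ^ 2) ^ 2 := by ring
    rw [this, Real.sqrt_sq (by positivity)]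
  rw [v1]
  simp_rw [this]
  exact integral_univ_inv_one_add_sq

theorem v1_welldefined_and_bounded :
    (∀ t : ℝ, Integrable (fun τ : ℝ => (Real.sqrt ((1 + τ ^ 2) * (1 + (t - τ) ^ 2)))⁻¹)) ∧
    v1 0 = Real.pi ∧ ∀ t : ℝ, 0 ≤ t → v1 t ≤ v1 0 := by
  refine ⟨v1_integrable, v1_zero, fun t _ => ?_⟩
  rw [v1_zero]
  -- Cauchy-Schwarz
  set f : ℝ → ℝ := fun τ => (Real.sqrt (1 + τ ^ 2))⁻¹ with hf
  set g : ℝ → ℝ := fun τ => (Real.sqrt (1 + (t - τ) ^ 2))⁻¹ with hg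
  have hfg : ∀ τ : ℝ, (Real.sqrt ((1 + τ ^ 2) * (1 + (t - τ) ^ 2)))⁻¹ = f τ * g τ := by
    intro τ
    rw [hf, hg, Real.sqrt_mul (by positivity), mul_inv]
  have hfsq : ∀ τ : ℝ, f τ ^ (2:ℝ) = (1 + τ ^ 2)⁻¹ := fun τ => by
    show ((Real.sqrt (1 + τ ^ 2))⁻¹) ^ (2:ℝ) = _
    rw [Real.rpow_two, inv_pow, Real.sq_sqrt (by positivity)]
  have hgsq : ∀ τ : ℝ, g τ ^ (2:ℝ) = (1 + (t - τ) ^ 2)⁻¹ := fun τ => by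
    show ((Real.sqrt (1 + (t - τ) ^ 2))⁻¹) ^ (2:ℝ) = _
    rw [Real.rpow_two, inv_pow, Real.sq_sqrt (by positivity)]
  have hfc : Continuous f := by
    apply Continuous.inv₀
    · continuity
    · intro τ; rw [Real.sqrt_ne_zero']; positivity
  have hgc : Continuous g := by
    apply Continuous.inv₀
    · continuity
    · intro τ; rw [Real.sqrt_ne_zero']; positivity
  have h2 : ENNReal.ofReal (2:ℝ) = 2 := by norm_num
  have hfL2 : MemLp f (ENNReal.ofReal 2) volume := by
    rw [h2]
    rw [memLp_two_iff_integrable_sq hfc.aestronglyMeasurable]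
    have : (fun τ : ℝ => f τ ^ 2) = fun τ : ℝ => (1 + τ ^ 2)⁻¹ := by
      funext τ
      rw [← Real.rpow_two, hfsq τ]
    rw [this]
    exact integrable_inv_one_add_sq
  have hgL2 : MemLp g (ENNReal.ofReal 2) volume := by
    rw [h2]
    rw [memLp_two_iff_integrable_sq hgc.aestronglyMeasurable]
    have : (fun τ : ℝ => g τ ^ 2) = fun τ : ℝ => (1 + (t - τ) ^ 2)⁻¹ := by
      funext τ
      rw [← Real.rpow_two, hgsq τ]
    rw [this]
    exact v1_shift_int t
  have hconj : (2:ℝ).HolderConjugate 2 := Real.holderConjugate_iff.mpr ⟨by norm_num, by norm_num⟩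
  have holder := integral_mul_le_Lp_mul_Lq_of_nonneg hconj
    (Filter.Eventually.of_forall fun τ => by rw [hf]; positivity)
    (Filter.Eventually.of_forall fun τ => by rw [hg]; positivity) hfL2 hgL2
  have hIf : ∫ τ : ℝ, f τ ^ (2:ℝ) = Real.pi := by
    simp_rw [hfsq]
    exact integral_univ_inv_one_add_sq
  have hIg : ∫ τ : ℝ, g τ ^ (2:ℝ) = Real.pi := by
    simp_rw [hgsq]
    have h1 : (fun τ : ℝ => (1 + (t - τ) ^ 2)⁻¹) = (fun τ : ℝ => (1 + ((t - τ) : ℝ) ^ 2)⁻¹) := rfl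
    have := MeasureTheory.integral_sub_left_eq_self (μ := volume)
      (fun x : ℝ => (1 + x ^ 2)⁻¹) t
    rw [this]
    exact integral_univ_inv_one_add_sq
  rw [hIf, hIg] at holder
  have hπ : Real.pi ^ ((1:ℝ)/2) * Real.pi ^ ((1:ℝ)/2) = Real.pi := by
    rw [← Real.rpow_add Real.pi_pos]
    norm_num
  rw [hπ] at holder
  calc v1 t = ∫ τ : ℝ, f τ * g τ :=
        integral_congr_ae (Filter.Eventually.of_forall hfg)
    _ ≤ Real.pi := holder
end

section
/- For the function v₁(t) = ∫_ℝ dτ / √((1+τ²)(1+(t-τ)²)), the derivative bound |v₁'(t)| ≤ (4/|t|) · v₁(t) holds for every t ≠ 0. -/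
open MeasureTheory

noncomputable def f1 (x : ℝ) : ℝ := (Real.sqrt (1 + x ^ 2))⁻¹
noncomputable def g1 (x : ℝ) : ℝ := -x * (f1 x) ^ 3

lemma sqrt_pos1 (x : ℝ) : 0 < Real.sqrt (1 + x ^ 2) := Real.sqrt_pos.2 (by positivity)

lemma f1_pos (x : ℝ) : 0 < f1 x := inv_pos.2 (sqrt_pos1 x)

lemma f1_le_one (x : ℝ) : f1 x ≤ 1 := by
  rw [f1, inv_le_one_iff₀]
  right
  have := Real.sqrt_le_sqrt (show (1:ℝ) ≤ 1 + x ^ 2 by nlinarith [sq_nonneg x])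
  simpa using this

lemma sq_f1 (x : ℝ) : f1 x ^ 2 = (1 + x ^ 2)⁻¹ := by
  rw [f1, inv_pow, Real.sq_sqrt (by positivity)]

lemma f1_neg (x : ℝ) : f1 (-x) = f1 x := by simp [f1]

lemma g1_neg (x : ℝ) : g1 (-x) = - g1 x := by simp [g1, f1_neg]

lemma f1_cont : Continuous f1 :=
  (Continuous.sqrt (by continuity)).inv₀ fun x => (sqrt_pos1 x).ne'

lemma g1_cont : Continuous g1 := by
  unfold g1; exact (continuous_neg.comp continuous_id).mul (f1_cont.pow 3)

lemma hasDerivAt_f1 (x : ℝ) : HasDerivAt f1 (g1 x) x := by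
  have h1 : HasDerivAt (fun y : ℝ => 1 + y ^ 2) (2 * x) x := by
    simpa using (hasDerivAt_pow 2 x).const_add 1
  have h2 : HasDerivAt (fun y : ℝ => Real.sqrt (1 + y ^ 2))
      (1 / (2 * Real.sqrt (1 + x ^ 2)) * (2 * x)) x :=
    (Real.hasDerivAt_sqrt (by positivity)).comp x h1
  have h3 := h2.inv (sqrt_pos1 x).ne'
  convert (show HasDerivAt f1 _ x from h3) using 1
  have hs : Real.sqrt (1 + x ^ 2) > 0 := sqrt_pos1 x
  have hs2 : Real.sqrt (1 + x ^ 2) ^ 2 = 1 + x ^ 2 := Real.sq_sqrt (by positivity)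
  rw [g1, f1]
  field_simp

lemma abs_g1_le (x : ℝ) : |g1 x| ≤ f1 x ^ 2 := by
  have h1 : |g1 x| = |x| * f1 x ^ 3 := by
    rw [g1, abs_mul, abs_neg, abs_pow, abs_of_pos (f1_pos x)]
  have h2 : |x| * f1 x ≤ 1 := by
    rw [f1]
    rw [mul_inv_le_iff₀ (sqrt_pos1 x), one_mul]
    rw [← Real.sqrt_sq_eq_abs]
    exact Real.sqrt_le_sqrt (by nlinarith)
  calc |g1 x| = (|x| * f1 x) * f1 x ^ 2 := by rw [h1]; ring
    _ ≤ 1 * f1 x ^ 2 := by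
        apply mul_le_mul_of_nonneg_right h2 (by positivity)
    _ = f1 x ^ 2 := one_mul _

-- monotonicity
lemma f1_le_f1 {a b : ℝ} (h : a ^ 2 ≤ b ^ 2) : f1 b ≤ f1 a := by
  rw [f1, f1]
  apply inv_anti₀ (sqrt_pos1 a)
  exact Real.sqrt_le_sqrt (by linarith)

lemma int_cauchy (c : ℝ) : Integrable (fun x : ℝ => (1 + (c - x) ^ 2)⁻¹) := by
  have h := integrable_inv_one_add_sq.comp_sub_right c
  have he : (fun x : ℝ => (1 + (c - x) ^ 2)⁻¹) = fun x : ℝ => (1 + (x - c) ^ 2)⁻¹ := by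
    funext x; rw [show (c - x) ^ 2 = (x - c) ^ 2 by ring]
  rw [he]; exact h

lemma int_cauchy' (c : ℝ) : Integrable (fun x : ℝ => (1 + (c + x) ^ 2)⁻¹) := by
  have h := integrable_inv_one_add_sq.comp_sub_right (-c)
  have he : (fun x : ℝ => (1 + (c + x) ^ 2)⁻¹) = fun x : ℝ => (1 + (x - -c) ^ 2)⁻¹ := by
    funext x; rw [show (c + x) ^ 2 = (x - -c) ^ 2 by ring]
  rw [he]; exact h

lemma intA (t : ℝ) : Integrable (fun u : ℝ => f1 u * f1 (t - u)) := by
  apply Integrable.mono' (g := fun u => 2⁻¹ * ((1 + u ^ 2)⁻¹ + (1 + (t - u) ^ 2)⁻¹))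
  · exact (((integrable_inv_one_add_sq).add (int_cauchy t)).const_mul _)
  · exact (f1_cont.mul (f1_cont.comp (by continuity))).aestronglyMeasurable
  · refine Filter.Eventually.of_forall fun u => ?_
    rw [Real.norm_eq_abs, abs_of_pos (mul_pos (f1_pos u) (f1_pos (t - u))),
      ← sq_f1, ← sq_f1]
    nlinarith [sq_nonneg (f1 u - f1 (t - u))]

lemma intA' (t : ℝ) : Integrable (fun u : ℝ => f1 u * f1 (t + u)) := by
  apply Integrable.mono' (g := fun u => 2⁻¹ * ((1 + u ^ 2)⁻¹ + (1 + (t + u) ^ 2)⁻¹))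
  · exact (((integrable_inv_one_add_sq).add (int_cauchy' t)).const_mul _)
  · exact (f1_cont.mul (f1_cont.comp (by continuity))).aestronglyMeasurable
  · refine Filter.Eventually.of_forall fun u => ?_
    rw [Real.norm_eq_abs, abs_of_pos (mul_pos (f1_pos u) (f1_pos (t + u))),
      ← sq_f1, ← sq_f1]
    nlinarith [sq_nonneg (f1 u - f1 (t + u))]

lemma intB (t : ℝ) : Integrable (fun u : ℝ => f1 (t - u) * g1 u) := by
  apply Integrable.mono' (g := fun u => (1 + u ^ 2)⁻¹)
  · exact integrable_inv_one_add_sq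
  · exact ((f1_cont.comp (by continuity)).mul g1_cont).aestronglyMeasurable
  · refine Filter.Eventually.of_forall fun u => ?_
    rw [Real.norm_eq_abs, abs_mul, abs_of_pos (f1_pos (t - u)), ← sq_f1]
    calc f1 (t - u) * |g1 u| ≤ 1 * f1 u ^ 2 :=
          mul_le_mul (f1_le_one _) (abs_g1_le u) (abs_nonneg _) one_pos.le
      _ = f1 u ^ 2 := one_mul _

lemma intB' (t : ℝ) : Integrable (fun u : ℝ => f1 (t + u) * g1 u) := by
  apply Integrable.mono' (g := fun u => (1 + u ^ 2)⁻¹)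
  · exact integrable_inv_one_add_sq
  · exact ((f1_cont.comp (by continuity)).mul g1_cont).aestronglyMeasurable
  · refine Filter.Eventually.of_forall fun u => ?_
    rw [Real.norm_eq_abs, abs_mul, abs_of_pos (f1_pos (t + u)), ← sq_f1]
    calc f1 (t + u) * |g1 u| ≤ 1 * f1 u ^ 2 :=
          mul_le_mul (f1_le_one _) (abs_g1_le u) (abs_nonneg _) one_pos.le
      _ = f1 u ^ 2 := one_mul _

lemma v1_eq : v1 = fun s => ∫ τ : ℝ, f1 τ * f1 (s - τ) := by
  funext s
  rw [v1]
  congr 1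
  funext τ
  rw [Real.sqrt_mul (by positivity), mul_inv, f1, f1]

lemma hasDeriv_v1 (t : ℝ) : HasDerivAt v1 (∫ τ : ℝ, f1 τ * g1 (t - τ)) t := by
  rw [v1_eq]
  have key := hasDerivAt_integral_of_dominated_loc_of_deriv_le
    (F := fun s τ => f1 τ * f1 (s - τ)) (F' := fun s τ => f1 τ * g1 (s - τ))
    (x₀ := t) (bound := fun τ => 4 * (1 + (t - τ) ^ 2)⁻¹) (μ := volume)
    (Metric.ball_mem_nhds t one_pos)
    (Filter.Eventually.of_forall fun s =>
      (f1_cont.mul (f1_cont.comp (by continuity))).aestronglyMeasurable)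
    (intA t)
    ((f1_cont.mul (g1_cont.comp (by continuity))).aestronglyMeasurable)
    ?_ ((int_cauchy t).const_mul 4) ?_
  · exact key.2
  · refine Filter.Eventually.of_forall fun τ => fun s hs => ?_
    have hst : |s - t| ≤ 1 := by
      rw [Metric.mem_ball, Real.dist_eq] at hs; exact hs.le
    have h1 : ‖f1 τ * g1 (s - τ)‖ ≤ (1 + (s - τ) ^ 2)⁻¹ := by
      rw [Real.norm_eq_abs, abs_mul, abs_of_pos (f1_pos τ), ← sq_f1]
      calc f1 τ * |g1 (s - τ)| ≤ 1 * f1 (s - τ) ^ 2 :=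
            mul_le_mul (f1_le_one _) (abs_g1_le _) (abs_nonneg _) one_pos.le
        _ = f1 (s - τ) ^ 2 := one_mul _
    refine h1.trans ?_
    have h0 : (s - t) ^ 2 ≤ 1 := by
      rw [← sq_abs]; nlinarith [abs_nonneg (s - t)]
    have h2 : 1 + (t - τ) ^ 2 ≤ 4 * (1 + (s - τ) ^ 2) := by
      nlinarith [sq_nonneg ((s - τ) - (s - t)), sq_nonneg ((s - τ) * (s - t)),
        sq_nonneg (1 - (s - τ) * (s - t))]
    show (1 + (s - τ) ^ 2)⁻¹ ≤ 4 * (1 + (t - τ) ^ 2)⁻¹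
    rw [show (4:ℝ) * (1 + (t - τ) ^ 2)⁻¹ = ((1 + (t - τ) ^ 2) / 4)⁻¹ by
      rw [inv_div]; ring]
    apply inv_anti₀ (by positivity)
    linarith
  · refine Filter.Eventually.of_forall fun τ => fun s _ => ?_
    have h := ((hasDerivAt_f1 (s - τ)).comp s ((hasDerivAt_id s).sub_const τ)).const_mul (f1 τ)
    simpa using h

lemma D_swap (t : ℝ) : (∫ τ : ℝ, f1 τ * g1 (t - τ)) = ∫ u : ℝ, f1 (t - u) * g1 u := by
  have h := integral_sub_left_eq_self (fun u => f1 (t - u) * g1 u) (μ := volume) t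
  simp only [sub_sub_cancel] at h
  exact h

lemma D_neg (t : ℝ) : (∫ u : ℝ, f1 (t - u) * g1 u) = - ∫ u : ℝ, f1 (t + u) * g1 u := by
  have h := integral_neg_eq_self (fun u => f1 (t - u) * g1 u) (μ := volume)
  have he : (fun u : ℝ => f1 (t - -u) * g1 (-u)) = fun u : ℝ => -(f1 (t + u) * g1 u) := by
    funext u; rw [g1_neg, show t - -u = t + u by ring]; ring
  rw [← h, he, integral_neg]

lemma V_neg (t : ℝ) : (∫ u : ℝ, f1 u * f1 (t - u)) = ∫ u : ℝ, f1 u * f1 (t + u) := by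
  have h := integral_neg_eq_self (fun u => f1 u * f1 (t + u)) (μ := volume)
  have he : (fun u : ℝ => f1 (-u) * f1 (t + -u)) = fun u : ℝ => f1 u * f1 (t - u) := by
    funext u; rw [f1_neg, show t + -u = t - u by ring]
  rw [← h, he]

lemma key_nonneg {t u : ℝ} (ht : 0 < t) (hu : 0 ≤ u) :
    |g1 u| * |f1 (t - u) - f1 (t + u)| ≤ 4 / t * (f1 u * (f1 (t - u) + f1 (t + u))) := by
  set a := f1 (t - u) with hadef
  set b := f1 (t + u) with hbdef
  set c := f1 u with hcdef
  have ha : 0 < a := f1_pos _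
  have hb : 0 < b := f1_pos _
  have hc : 0 < c := f1_pos _
  have hba : b ≤ a := f1_le_f1 (by nlinarith)
  have ha2 : a ^ 2 * (1 + (t - u) ^ 2) = 1 := by
    rw [hadef, sq_f1]; field_simp
  have hb2 : b ^ 2 * (1 + (t + u) ^ 2) = 1 := by
    rw [hbdef, sq_f1]; field_simp
  have hc2 : c ^ 2 * (1 + u ^ 2) = 1 := by
    rw [hcdef, sq_f1]; field_simp
  have habs1 : |g1 u| = u * c ^ 3 := by
    rw [g1, abs_mul, abs_neg, abs_of_nonneg hu, abs_pow, abs_of_pos hc]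
  have habs2 : |a - b| = a - b := abs_of_nonneg (by linarith)
  rw [habs1, habs2, div_mul_eq_mul_div, le_div_iff₀ ht]
  -- goal : u * c ^ 3 * (a - b) * t ≤ 4 * (c * (a + b))
  rcases le_or_gt t (2 * u) with hcase | hcase
  · -- u ≥ t/2
    have h1 : u * t * c ^ 2 ≤ 2 := by
      calc u * t * c ^ 2 ≤ 2 * (1 + u ^ 2) * c ^ 2 := by nlinarith [sq_nonneg u]
        _ = 2 := by linear_combination 2 * hc2
    calc u * c ^ 3 * (a - b) * t = (u * t * c ^ 2) * (c * (a - b)) := by ring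
      _ ≤ 2 * (c * (a - b)) := by
          apply mul_le_mul_of_nonneg_right h1 (by nlinarith)
      _ ≤ 4 * (c * (a + b)) := by nlinarith [mul_pos hc hb, mul_pos hc ha]
  · -- u ≤ t/2
    have step1 : a ^ 2 - b ^ 2 = 4 * t * u * (a ^ 2 * b ^ 2) := by
      linear_combination (-(a ^ 2)) * hb2 + b ^ 2 * ha2
    have step2 : a - b ≤ 2 * t * u * (a ^ 2 * b) := by
      have h4 : (a - b) * (a + b) ≤ (2 * t * u * (a ^ 2 * b)) * (a + b) := by
        have e : (a - b) * (a + b) = 4 * t * u * (a ^ 2 * b ^ 2) := by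
          linear_combination step1
        rw [e]
        nlinarith [mul_nonneg (mul_nonneg (mul_nonneg (mul_nonneg
          (by linarith : (0:ℝ) ≤ 2 * t) hu) (sq_nonneg a)) hb.le) (sub_nonneg.2 hba)]
      exact le_of_mul_le_mul_right h4 (by linarith)
    have step3 : t ^ 2 * u ^ 2 * (c ^ 2 * a ^ 2) ≤ 4 := by
      have hpq : (c ^ 2 * a ^ 2) * ((1 + u ^ 2) * (1 + (t - u) ^ 2)) = 1 := by
        linear_combination (a ^ 2 * (1 + (t - u) ^ 2)) * hc2 + ha2
      have hineq : t ^ 2 * u ^ 2 ≤ 4 * ((1 + u ^ 2) * (1 + (t - u) ^ 2)) := by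
        nlinarith [mul_nonneg (mul_nonneg (sub_nonneg.2 hcase.le) hu) hu, sq_nonneg (t - u),
          sq_nonneg u, mul_nonneg (sub_nonneg.2 hcase.le) (by linarith : (0:ℝ) ≤ 3 * t - 2 * u)]
      nlinarith [mul_le_mul_of_nonneg_left hineq (by positivity : (0:ℝ) ≤ c ^ 2 * a ^ 2)]
    calc u * c ^ 3 * (a - b) * t ≤ u * c ^ 3 * (2 * t * u * (a ^ 2 * b)) * t := by
          apply mul_le_mul_of_nonneg_right _ ht.le
          apply mul_le_mul_of_nonneg_left step2 (by positivity)
      _ = 2 * (t ^ 2 * u ^ 2 * (c ^ 2 * a ^ 2)) * (c * b) := by ring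
      _ ≤ 2 * 4 * (c * b) := by
          apply mul_le_mul_of_nonneg_right _ (by positivity)
          linarith [step3]
      _ ≤ 4 * (c * (a + b)) := by nlinarith [mul_pos hc hb, mul_le_mul_of_nonneg_left hba hc.le]

lemma key_pos {t : ℝ} (ht : 0 < t) (u : ℝ) :
    |g1 u| * |f1 (t - u) - f1 (t + u)| ≤ 4 / t * (f1 u * (f1 (t - u) + f1 (t + u))) := by
  rcases le_or_gt 0 u with hu | hu
  · exact key_nonneg ht hu
  · have h := key_nonneg ht (neg_nonneg.2 hu.le)
    rw [show t - -u = t + u by ring, show t + -u = t - u by ring, g1_neg, abs_neg, f1_neg,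
      abs_sub_comm] at h
    linarith [h]

lemma key_all {t : ℝ} (ht : t ≠ 0) (u : ℝ) :
    ‖f1 (t - u) * g1 u - f1 (t + u) * g1 u‖ ≤
      4 / |t| * (f1 u * (f1 (t - u) + f1 (t + u))) := by
  have hnorm : ‖f1 (t - u) * g1 u - f1 (t + u) * g1 u‖ =
      |g1 u| * |f1 (t - u) - f1 (t + u)| := by
    rw [Real.norm_eq_abs, show f1 (t - u) * g1 u - f1 (t + u) * g1 u
      = g1 u * (f1 (t - u) - f1 (t + u)) by ring, abs_mul]
  rw [hnorm]
  rcases ht.lt_or_gt with h | h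
  · have hk := key_pos (t := -t) (by linarith) (-u)
    rw [show -t - -u = -(t - u) by ring, show -t + -u = -(t + u) by ring,
      f1_neg, f1_neg, f1_neg, g1_neg, abs_neg] at hk
    rw [abs_of_neg h]
    linarith [hk]
  · rw [abs_of_pos h]
    exact key_pos h u

theorem abs_deriv_v1_le :
    ∀ t : ℝ, t ≠ 0 → |deriv v1 t| ≤ (4 / |t|) * v1 t := by
  intro t ht
  rw [(hasDeriv_v1 t).deriv]
  -- symmetrized derivative
  have hsub : (∫ u : ℝ, (f1 (t - u) * g1 u - f1 (t + u) * g1 u))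
      = (∫ u : ℝ, f1 (t - u) * g1 u) - ∫ u : ℝ, f1 (t + u) * g1 u :=
    integral_sub (intB t) (intB' t)
  have hD2 : (∫ τ : ℝ, f1 τ * g1 (t - τ))
      = 2⁻¹ * ∫ u : ℝ, (f1 (t - u) * g1 u - f1 (t + u) * g1 u) := by
    rw [hsub, D_swap t]
    linarith [D_neg t]
  have hadd : (∫ u : ℝ, (f1 u * f1 (t - u) + f1 u * f1 (t + u)))
      = (∫ u : ℝ, f1 u * f1 (t - u)) + ∫ u : ℝ, f1 u * f1 (t + u) :=
    integral_add (intA t) (intA' t)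
  have hV2 : v1 t = 2⁻¹ * ∫ u : ℝ, (f1 u * f1 (t - u) + f1 u * f1 (t + u)) := by
    rw [v1_eq]
    simp only []
    rw [hadd]
    linarith [V_neg t]
  rw [hD2, hV2]
  rw [abs_mul, abs_of_pos (by norm_num : (0:ℝ) < (2:ℝ)⁻¹)]
  rw [show (4 / |t|) * (2⁻¹ * ∫ u : ℝ, (f1 u * f1 (t - u) + f1 u * f1 (t + u)))
    = 2⁻¹ * ((4 / |t|) * ∫ u : ℝ, (f1 u * f1 (t - u) + f1 u * f1 (t + u))) by ring]
  apply mul_le_mul_of_nonneg_left _ (by norm_num)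
  have hint2 : Integrable (fun u : ℝ => 4 / |t| * (f1 u * (f1 (t - u) + f1 (t + u)))) := by
    have h0 := ((intA t).add (intA' t)).const_mul (4 / |t|)
    apply h0.congr (Filter.Eventually.of_forall fun u => ?_)
    simp only [Pi.add_apply]
    ring
  calc |∫ u : ℝ, (f1 (t - u) * g1 u - f1 (t + u) * g1 u)|
      = ‖∫ u : ℝ, (f1 (t - u) * g1 u - f1 (t + u) * g1 u)‖ := (Real.norm_eq_abs _).symm
    _ ≤ ∫ u : ℝ, ‖f1 (t - u) * g1 u - f1 (t + u) * g1 u‖ :=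
        norm_integral_le_integral_norm _
    _ ≤ ∫ u : ℝ, 4 / |t| * (f1 u * (f1 (t - u) + f1 (t + u))) :=
        integral_mono ((intB t).sub (intB' t)).norm hint2 (fun u => key_all ht u)
    _ = 4 / |t| * ∫ u : ℝ, (f1 u * f1 (t - u) + f1 u * f1 (t + u)) := by
        rw [← integral_const_mul]
        congr 1
        funext u
        ring
end

section
/- For every natural number n ≥ 1, ∫_0^∞ (K₀(y))^{n+1} dy is finite, and there exist positive constants c₁', c₂' independent of n such that c₁' · (n+1)! ≤ ∫_0^∞ (K₀(y))^{n+1} dy ≤ c₂' · (n+1)!. -/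
open MeasureTheory Real Set

noncomputable def K0 (y : ℝ) : ℝ := ∫ u in Set.Ioi (0 : ℝ), Real.exp (-y * Real.cosh u)

lemma half_exp_le_cosh (u : ℝ) : Real.exp u / 2 ≤ Real.cosh u := by
  rw [Real.cosh_eq]
  have := (Real.exp_pos (-u)).le
  linarith

lemma cosh_le_exp_of_nonneg {u : ℝ} (hu : 0 ≤ u) : Real.cosh u ≤ Real.exp u := by
  rw [Real.cosh_eq]
  have : Real.exp (-u) ≤ Real.exp u := Real.exp_le_exp.2 (by linarith)
  linarith

lemma K0_integrand_integrable {y : ℝ} (hy : 0 < y) :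
    IntegrableOn (fun u => Real.exp (-y * Real.cosh u)) (Set.Ioi (0:ℝ)) := by
  refine Integrable.mono' (g := fun u => Real.exp (-(y/2) * u))
    (exp_neg_integrableOn_Ioi 0 (by positivity)) ?_ ?_
  · exact (Real.continuous_exp.comp (continuous_const.mul Real.continuous_cosh)
      ).aestronglyMeasurable.restrict
  · filter_upwards [ae_restrict_mem measurableSet_Ioi] with u hu
    rw [Real.norm_eq_abs, abs_of_pos (Real.exp_pos _)]
    apply Real.exp_le_exp.2
    have h0 : (0:ℝ) < u := hu
    have h1 : (1 + u)/2 ≤ Real.cosh u := by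
      have := Real.add_one_le_exp u
      have := half_exp_le_cosh u
      linarith
    nlinarith

lemma K0_nonneg (y : ℝ) : 0 ≤ K0 y :=
  setIntegral_nonneg measurableSet_Ioi fun u _ => (Real.exp_pos _).le

lemma K0_stronglyMeasurable : StronglyMeasurable K0 := by
  have hc : Continuous fun p : ℝ × ℝ => Real.exp (-p.1 * Real.cosh p.2) := by
    exact Real.continuous_exp.comp ((continuous_fst.neg).mul (Real.continuous_cosh.comp continuous_snd))
  have h : StronglyMeasurable fun p : ℝ × ℝ =>
      (Set.univ ×ˢ Set.Ioi (0:ℝ)).indicator (fun p : ℝ × ℝ => Real.exp (-p.1 * Real.cosh p.2)) p :=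
    hc.stronglyMeasurable.indicator (MeasurableSet.univ.prod measurableSet_Ioi)
  have h2 := h.integral_prod_right' (ν := volume)
  have : K0 = fun y => ∫ u, (Set.univ ×ˢ Set.Ioi (0:ℝ)).indicator
      (fun p : ℝ × ℝ => Real.exp (-p.1 * Real.cosh p.2)) (y, u) := by
    funext y
    rw [K0, ← integral_indicator measurableSet_Ioi]
    congr 1
    funext u
    by_cases hu : u ∈ Set.Ioi (0:ℝ) <;> simp [Set.indicator, hu]
  rw [this]
  exact h2

lemma log_pow_integral (c : ℝ) (hc : 0 < c) (m : ℕ) :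
    IntegrableOn (fun y => (Real.log (c / y)) ^ m) (Set.Ioo 0 c) ∧
    ∫ y in Set.Ioo (0:ℝ) c, (Real.log (c / y)) ^ m = c * (Nat.factorial m : ℝ) := by
  have himg : (fun t => c * Real.exp (-t)) '' (Set.Ioi (0:ℝ)) = Set.Ioo 0 c := by
    ext y
    constructor
    · rintro ⟨t, ht, rfl⟩
      have ht' : (0:ℝ) < t := ht
      constructor
      · positivity
      · have h2 : Real.exp (-t) < 1 := Real.exp_lt_one_iff.2 (by linarith)
        show c * Real.exp (-t) < c
        nlinarith
    · rintro ⟨hy0, hyc⟩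
      refine ⟨Real.log (c / y), ?_, ?_⟩
      · have : 1 < c / y := (one_lt_div hy0).2 hyc
        exact Real.log_pos this
      · simp only
        rw [show -Real.log (c/y) = Real.log ((c/y)⁻¹) by rw [Real.log_inv],
          Real.exp_log (by positivity)]
        field_simp
  have hderiv : ∀ t ∈ Set.Ioi (0:ℝ),
      HasDerivWithinAt (fun t => c * Real.exp (-t)) (-(c * Real.exp (-t))) (Set.Ioi 0) t := by
    intro t _
    have : HasDerivAt (fun t => c * Real.exp (-t)) (c * (Real.exp (-t) * (-1))) t :=
      ((Real.hasDerivAt_exp (-t)).comp t ((hasDerivAt_id t).neg)).const_mul c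
    exact (this.congr_deriv (by ring)).hasDerivWithinAt
  have hinj : Set.InjOn (fun t => c * Real.exp (-t)) (Set.Ioi 0) := by
    intro a _ b _ hab
    simp only at hab
    have := mul_left_cancel₀ hc.ne' hab
    have := Real.exp_injective this
    linarith
  have hcongr : ∀ t ∈ Set.Ioi (0:ℝ),
      |(-(c * Real.exp (-t)))| • (Real.log (c / (c * Real.exp (-t)))) ^ m
        = c * (Real.exp (-t) * t ^ m) := by
    intro t _
    have h1 : c / (c * Real.exp (-t)) = Real.exp t := by
      rw [Real.exp_neg]
      field_simp
    rw [h1, Real.log_exp, abs_neg, abs_of_pos (by positivity), smul_eq_mul]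
    ring
  have hGamma : ∫ t in Set.Ioi (0:ℝ), c * (Real.exp (-t) * t ^ m) = c * (Nat.factorial m : ℝ) := by
    rw [MeasureTheory.integral_const_mul]
    congr 1
    have h1 : ∫ t in Set.Ioi (0:ℝ), Real.exp (-t) * t ^ m
        = ∫ t in Set.Ioi (0:ℝ), Real.exp (-t) * t ^ ((m:ℝ) + 1 - 1) := by
      refine setIntegral_congr_fun measurableSet_Ioi fun t ht => ?_
      have ht' : (0:ℝ) < t := ht
      rw [show (m:ℝ) + 1 - 1 = (m:ℝ) by ring, Real.rpow_natCast]
    rw [h1, ← Real.Gamma_eq_integral (by positivity : (0:ℝ) < (m:ℝ) + 1)]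
    rw [show ((m:ℝ) + 1) = ((m:ℕ) : ℝ) + 1 by push_cast; ring, Real.Gamma_nat_eq_factorial]
  constructor
  · rw [← himg, integrableOn_image_iff_integrableOn_abs_deriv_smul measurableSet_Ioi hderiv hinj]
    refine (IntegrableOn.congr_fun ?_ (fun t ht => (hcongr t ht).symm) measurableSet_Ioi)
    exact ((Real.GammaIntegral_convergent (by positivity : (0:ℝ) < (m:ℝ) + 1)).congr_fun
      (fun t ht => by
        have ht' : (0:ℝ) < t := ht
        rw [show (m:ℝ) + 1 - 1 = (m:ℝ) by ring, Real.rpow_natCast]) measurableSet_Ioi).const_mul c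
  · rw [← himg, integral_image_eq_integral_abs_deriv_smul measurableSet_Ioi hderiv hinj]
    rw [setIntegral_congr_fun measurableSet_Ioi hcongr]
    exact hGamma

lemma K0_lower {y : ℝ} (hy0 : 0 < y) (hy1 : y < 1) : Real.log (1 / y) - 1 ≤ K0 y := by
  set L := Real.log (1 / y) with hL
  have hLpos : 0 < L := Real.log_pos ((one_lt_one_div hy0 hy1))
  have hexpL : Real.exp L = 1 / y := Real.exp_log (by positivity)
  have step1 : ∫ u in Set.Ioc (0:ℝ) L, Real.exp (-y * Real.cosh u) ≤ K0 y := by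
    refine setIntegral_mono_set (K0_integrand_integrable hy0) ?_ ?_
    · filter_upwards with u using (Real.exp_pos _).le
    · filter_upwards with u hu using Set.Ioc_subset_Ioi_self hu
  have hInt1 : IntegrableOn (fun u => (1 : ℝ) - y * Real.exp u) (Set.Ioc 0 L) :=
    (continuous_const.sub (continuous_const.mul Real.continuous_exp)).integrableOn_Ioc
  have hInt2 : IntegrableOn (fun u => Real.exp (-y * Real.cosh u)) (Set.Ioc 0 L) :=
    (Real.continuous_exp.comp (continuous_const.mul Real.continuous_cosh)).integrableOn_Ioc
  have step2 : ∫ u in Set.Ioc (0:ℝ) L, ((1:ℝ) - y * Real.exp u)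
      ≤ ∫ u in Set.Ioc (0:ℝ) L, Real.exp (-y * Real.cosh u) := by
    refine setIntegral_mono_on hInt1 hInt2 measurableSet_Ioc fun u hu => ?_
    have hu0 : 0 ≤ u := hu.1.le
    have h1 : Real.cosh u ≤ Real.exp u := cosh_le_exp_of_nonneg hu0
    have h2 : 1 - y * Real.exp u ≤ Real.exp (-(y * Real.exp u)) := by
      have := Real.add_one_le_exp (-(y * Real.exp u))
      linarith
    refine h2.trans (Real.exp_le_exp.2 ?_)
    nlinarith
  have step3 : ∫ u in Set.Ioc (0:ℝ) L, ((1:ℝ) - y * Real.exp u) = L - 1 + y := by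
    rw [← intervalIntegral.integral_of_le hLpos.le]
    rw [intervalIntegral.integral_sub intervalIntegrable_const
      ((Real.continuous_exp.intervalIntegrable 0 L).const_mul y)]
    rw [intervalIntegral.integral_const, intervalIntegral.integral_const_mul,
      integral_exp, hexpL]
    field_simp
    rw [Real.exp_zero]; ring
  have : L - 1 ≤ L - 1 + y := by linarith
  linarith

lemma K0_upper_small {y : ℝ} (hy0 : 0 < y) (hy2 : y ≤ 2) : K0 y ≤ Real.log (5 / y) := by
  set u₀ := Real.log (4 / y) with hu₀
  have h4y : (1:ℝ) < 4 / y := by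
    rw [lt_div_iff₀ hy0]; linarith
  have hu₀pos : 0 < u₀ := Real.log_pos h4y
  have hexpu₀ : Real.exp u₀ = 4 / y := Real.exp_log (by positivity)
  have hsplit : K0 y = (∫ u in Set.Ioc (0:ℝ) u₀, Real.exp (-y * Real.cosh u))
      + ∫ u in Set.Ioi u₀, Real.exp (-y * Real.cosh u) := by
    rw [K0, ← Set.Ioc_union_Ioi_eq_Ioi hu₀pos.le]
    exact setIntegral_union (Set.Ioc_disjoint_Ioi le_rfl) measurableSet_Ioi
      ((K0_integrand_integrable hy0).mono_set Set.Ioc_subset_Ioi_self)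
      ((K0_integrand_integrable hy0).mono_set (Set.Ioi_subset_Ioi hu₀pos.le))
  have part1 : ∫ u in Set.Ioc (0:ℝ) u₀, Real.exp (-y * Real.cosh u) ≤ u₀ := by
    have : ∫ u in Set.Ioc (0:ℝ) u₀, Real.exp (-y * Real.cosh u)
        ≤ ∫ _u in Set.Ioc (0:ℝ) u₀, (1:ℝ) := by
      refine setIntegral_mono_on
        ((Real.continuous_exp.comp (continuous_const.mul Real.continuous_cosh)).integrableOn_Ioc)
        (integrableOn_const measure_Ioc_lt_top.ne) measurableSet_Ioc fun u hu => ?_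
      rw [Real.exp_le_one_iff]
      have := Real.one_le_cosh u
      nlinarith
    refine this.trans ?_
    rw [setIntegral_const, smul_eq_mul, mul_one, Real.volume_real_Ioc_of_le (by linarith)]
    linarith
  have hbound : ∀ u ∈ Set.Ioi u₀, Real.exp (-y * Real.cosh u)
      ≤ Real.exp (u₀ - 2) * Real.exp (-u) := by
    intro u hu
    have huu : u₀ < u := hu
    rw [← Real.exp_add]
    apply Real.exp_le_exp.2
    have h1 : Real.exp u₀ * Real.exp (u - u₀) ≤ Real.exp u := by
      rw [← Real.exp_add]; apply Real.exp_le_exp.2; linarith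
    have h2 : 1 + (u - u₀) ≤ Real.exp (u - u₀) := by
      have := Real.add_one_le_exp (u - u₀); linarith
    have h3 : Real.exp u / 2 ≤ Real.cosh u := half_exp_le_cosh u
    -- y * cosh u ≥ (y/2) * exp u ≥ (y/2) * (4/y) * (1 + (u - u₀)) = 2 + 2(u-u₀) ≥ 2 + (u - u₀)
    have h4 : (y / 2) * (4 / y) = 2 := by field_simp; ring
    have h5 : 2 * (1 + (u - u₀)) ≤ y * Real.cosh u := by
      have hy2' : 0 < y / 2 := by positivity
      have : (y/2) * ((4/y) * (1 + (u - u₀))) ≤ (y/2) * Real.exp u := by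
        apply mul_le_mul_of_nonneg_left _ hy2'.le
        calc (4/y) * (1 + (u - u₀)) ≤ Real.exp u₀ * Real.exp (u - u₀) := by
              rw [hexpu₀]
              exact mul_le_mul_of_nonneg_left h2 (by positivity)
          _ ≤ Real.exp u := h1
      nlinarith
    linarith
  have part2 : ∫ u in Set.Ioi u₀, Real.exp (-y * Real.cosh u) ≤ Real.exp (-2 : ℝ) := by
    have hInt : IntegrableOn (fun u => Real.exp (u₀ - 2) * Real.exp (-u)) (Set.Ioi u₀) := by
      exact IntegrableOn.congr_fun
        ((exp_neg_integrableOn_Ioi u₀ zero_lt_one).const_mul (Real.exp (u₀ - 2)))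
        (fun u _ => by rw [neg_one_mul]) measurableSet_Ioi
    have h1 : ∫ u in Set.Ioi u₀, Real.exp (-y * Real.cosh u)
        ≤ ∫ u in Set.Ioi u₀, Real.exp (u₀ - 2) * Real.exp (-u) :=
      setIntegral_mono_on
        ((K0_integrand_integrable hy0).mono_set (Set.Ioi_subset_Ioi hu₀pos.le))
        hInt measurableSet_Ioi hbound
    refine h1.trans ?_
    rw [MeasureTheory.integral_const_mul, integral_exp_neg_Ioi, ← Real.exp_add]
    apply le_of_eq
    congr 1
    ring
  have hlog54 : Real.exp (-2 : ℝ) ≤ Real.log (5 / 4) := by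
    have h1 : Real.exp (-2 : ℝ) ≤ 1 / 7 := by
      have h := Real.exp_one_gt_d9
      have he2 : Real.exp 2 = Real.exp 1 * Real.exp 1 := by rw [← Real.exp_add]; norm_num
      have h7 : (7:ℝ) ≤ Real.exp 2 := by nlinarith
      have hinv : Real.exp (-2:ℝ) * Real.exp 2 = 1 := by rw [← Real.exp_add]; norm_num
      nlinarith [Real.exp_pos (-2:ℝ)]
    have h2 : (1:ℝ) / 7 ≤ Real.log (5 / 4) := by
      rw [Real.le_log_iff_exp_le (by norm_num)]
      have h3 : Real.exp (-(1/7) : ℝ) ≥ 1 - 1/7 := by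
        have := Real.add_one_le_exp (-(1/7) : ℝ); linarith
      have h4 : Real.exp ((1/7):ℝ) * Real.exp (-(1/7):ℝ) = 1 := by
        rw [← Real.exp_add]; norm_num
      nlinarith [Real.exp_pos ((1/7):ℝ)]
    linarith
  have hlogsum : u₀ + Real.log (5 / 4) = Real.log (5 / y) := by
    rw [hu₀, ← Real.log_mul (by positivity) (by norm_num)]
    congr 1
    field_simp
  linarith [hsplit, part1, part2, hlog54, hlogsum]

lemma K0_upper_large {y : ℝ} (hy0 : 0 < y) :
    K0 y ≤ Real.exp (-(3/4) * y) * (4 / y) := by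
  have hb : (0:ℝ) < y / 4 := by positivity
  have hInt : IntegrableOn (fun u => Real.exp (-(3/4) * y) * Real.exp (-(y/4 * u)))
      (Set.Ioi (0:ℝ)) := by
    refine IntegrableOn.congr_fun
      ((exp_neg_integrableOn_Ioi 0 hb).const_mul (Real.exp (-(3/4) * y)))
      (fun u _ => by ring_nf) measurableSet_Ioi
  have hpt : ∀ u ∈ Set.Ioi (0:ℝ), Real.exp (-y * Real.cosh u)
      ≤ Real.exp (-(3/4) * y) * Real.exp (-(y/4 * u)) := by
    intro u hu
    have hu0 : (0:ℝ) < u := hu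
    rw [← Real.exp_add]
    apply Real.exp_le_exp.2
    have h1 : Real.exp u / 2 ≤ Real.cosh u := half_exp_le_cosh u
    have h2 : (1:ℝ) ≤ Real.cosh u := Real.one_le_cosh u
    have h3 : 1 + u ≤ Real.exp u := by have := Real.add_one_le_exp u; linarith
    nlinarith
  have hmono : K0 y ≤ ∫ u in Set.Ioi (0:ℝ), Real.exp (-(3/4) * y) * Real.exp (-(y/4 * u)) :=
    setIntegral_mono_on (K0_integrand_integrable hy0) hInt measurableSet_Ioi hpt
  refine hmono.trans (le_of_eq ?_)
  rw [MeasureTheory.integral_const_mul]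
  congr 1
  have := integral_comp_mul_left_Ioi (fun x => Real.exp (-x)) 0 hb
  simp only [mul_zero, smul_eq_mul] at this
  rw [this, integral_exp_neg_Ioi]
  norm_num

lemma K0_le_of_two_le {y : ℝ} (hy : 2 ≤ y) : K0 y ≤ 2 * Real.exp (-(3/4) * y) := by
  have hy0 : (0:ℝ) < y := by linarith
  refine (K0_upper_large hy0).trans ?_
  rw [mul_comm (2:ℝ)]
  apply mul_le_mul_of_nonneg_left _ (Real.exp_pos _).le
  rw [div_le_iff₀ hy0]
  linarith

lemma K0_lt_one_of_two_le {y : ℝ} (hy : 2 ≤ y) : K0 y ≤ 1 := by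
  refine (K0_le_of_two_le hy).trans ?_
  have h1 : Real.exp (-(3/4) * y) ≤ Real.exp (-(3/2) : ℝ) :=
    Real.exp_le_exp.2 (by nlinarith)
  have h2 : Real.exp (-(3/2):ℝ) ≤ 1/2 := by
    have h := Real.exp_one_gt_d9
    have h3 : (2:ℝ) ≤ Real.exp (3/2) := by
      have : Real.exp 1 ≤ Real.exp (3/2 : ℝ) := Real.exp_le_exp.2 (by norm_num)
      linarith
    have hinv : Real.exp (-(3/2):ℝ) * Real.exp (3/2:ℝ) = 1 := by rw [← Real.exp_add]; norm_num
    nlinarith [Real.exp_pos (-(3/2):ℝ)]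
  linarith

lemma K0_pow_aesm (n : ℕ) (s : Set ℝ) :
    AEStronglyMeasurable (fun y => (K0 y) ^ n) (volume.restrict s) :=
  (K0_stronglyMeasurable.measurable.pow_const n).aestronglyMeasurable.restrict

lemma K0_pow_integrableOn_Ioc (n : ℕ) :
    IntegrableOn (fun y => (K0 y) ^ (n + 1)) (Set.Ioc 0 2) := by
  refine Integrable.mono' ((log_pow_integral 5 (by norm_num) (n+1)).1.mono_set ?_)
    (K0_pow_aesm (n+1) _) ?_
  · intro y hy
    exact ⟨hy.1, by linarith [hy.2]⟩
  · filter_upwards [ae_restrict_mem measurableSet_Ioc] with y hy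
    rw [Real.norm_eq_abs, abs_of_nonneg (pow_nonneg (K0_nonneg y) _)]
    exact pow_le_pow_left₀ (K0_nonneg y) (K0_upper_small hy.1 hy.2) _

lemma tail_integrable : IntegrableOn (fun y => 2 * Real.exp (-(3/4) * y)) (Set.Ioi (2:ℝ)) := by
  refine IntegrableOn.congr_fun
    ((exp_neg_integrableOn_Ioi 2 (by norm_num : (0:ℝ) < 3/4)).const_mul 2)
    (fun y _ => by ring_nf) measurableSet_Ioi

lemma K0_pow_integrableOn_Ioi_two (n : ℕ) (hn : 1 ≤ n) :
    IntegrableOn (fun y => (K0 y) ^ (n + 1)) (Set.Ioi 2) := by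
  refine Integrable.mono' tail_integrable (K0_pow_aesm (n+1) _) ?_
  filter_upwards [ae_restrict_mem measurableSet_Ioi] with y hy
  have hy2 : (2:ℝ) ≤ y := le_of_lt hy
  rw [Real.norm_eq_abs, abs_of_nonneg (pow_nonneg (K0_nonneg y) _)]
  calc (K0 y) ^ (n+1) ≤ K0 y :=
        pow_le_of_le_one (K0_nonneg y) (K0_lt_one_of_two_le hy2) (Nat.succ_ne_zero n)
    _ ≤ 2 * Real.exp (-(3/4) * y) := K0_le_of_two_le hy2

lemma K0_pow_integrableOn (n : ℕ) (hn : 1 ≤ n) :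
    IntegrableOn (fun y => (K0 y) ^ (n + 1)) (Set.Ioi 0) := by
  rw [← Set.Ioc_union_Ioi_eq_Ioi (by norm_num : (0:ℝ) ≤ 2)]
  exact (K0_pow_integrableOn_Ioc n).union (K0_pow_integrableOn_Ioi_two n hn)

lemma tail_integral_le_one : ∫ y in Set.Ioi (2:ℝ), 2 * Real.exp (-(3/4) * y) ≤ 1 := by
  have hb : (0:ℝ) < 3/4 := by norm_num
  have h1 : ∫ y in Set.Ioi (2:ℝ), Real.exp (-(3/4 * y)) = (3/4 : ℝ)⁻¹ * Real.exp (-(3/2)) := by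
    have := integral_comp_mul_left_Ioi (fun x => Real.exp (-x)) 2 hb
    simp only [smul_eq_mul] at this
    rw [this, integral_exp_neg_Ioi]
    norm_num
  have h2 : ∫ y in Set.Ioi (2:ℝ), 2 * Real.exp (-(3/4) * y)
      = 2 * ((3/4 : ℝ)⁻¹ * Real.exp (-(3/2))) := by
    rw [← h1, ← MeasureTheory.integral_const_mul]
    refine setIntegral_congr_fun measurableSet_Ioi fun y _ => ?_
    ring_nf
  rw [h2]
  have h := Real.exp_one_gt_d9
  have h3 : (8/3 : ℝ) ≤ Real.exp (3/2) := by
    have : Real.exp 1 ≤ Real.exp (3/2 : ℝ) := Real.exp_le_exp.2 (by norm_num)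
    linarith
  have hinv : Real.exp (-(3/2):ℝ) * Real.exp (3/2:ℝ) = 1 := by rw [← Real.exp_add]; norm_num
  nlinarith [Real.exp_pos (-(3/2):ℝ)]

theorem K0_pow_integral_bounds :
    ∃ c₁' c₂' : ℝ, 0 < c₁' ∧ 0 < c₂' ∧ ∀ n : ℕ, 1 ≤ n →
      IntegrableOn (fun y => (K0 y) ^ (n + 1)) (Set.Ioi 0) ∧
      c₁' * (Nat.factorial (n + 1) : ℝ) ≤ ∫ y in Set.Ioi (0:ℝ), (K0 y) ^ (n + 1) ∧
      (∫ y in Set.Ioi (0:ℝ), (K0 y) ^ (n + 1)) ≤ c₂' * (Nat.factorial (n + 1) : ℝ) := by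
  refine ⟨Real.exp (-1), 6, Real.exp_pos _, by norm_num, fun n hn => ?_⟩
  have hint := K0_pow_integrableOn n hn
  refine ⟨hint, ?_, ?_⟩
  · have he : (0:ℝ) < Real.exp (-1) := Real.exp_pos _
    have he1 : Real.exp (-1:ℝ) < 1 := Real.exp_lt_one_iff.2 (by norm_num)
    have hsub : Set.Ioo (0:ℝ) (Real.exp (-1)) ⊆ Set.Ioi 0 := fun y hy => hy.1
    have hmono1 : ∫ y in Set.Ioo (0:ℝ) (Real.exp (-1)), (K0 y)^(n+1)
        ≤ ∫ y in Set.Ioi (0:ℝ), (K0 y)^(n+1) := by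
      refine setIntegral_mono_set hint ?_ ?_
      · filter_upwards with y using pow_nonneg (K0_nonneg y) _
      · filter_upwards with y hy using hsub hy
    have hmono2 : ∫ y in Set.Ioo (0:ℝ) (Real.exp (-1)), (Real.log (Real.exp (-1) / y))^(n+1)
        ≤ ∫ y in Set.Ioo (0:ℝ) (Real.exp (-1)), (K0 y)^(n+1) := by
      refine setIntegral_mono_on ((log_pow_integral _ he (n+1)).1)
        (hint.mono_set hsub) measurableSet_Ioo fun y hy => ?_
      have hy0 : 0 < y := hy.1
      have hy1 : y < 1 := lt_trans hy.2 he1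
      have hlog : Real.log (Real.exp (-1) / y) = Real.log (1/y) - 1 := by
        rw [Real.log_div (Real.exp_ne_zero _) hy0.ne', Real.log_exp,
          Real.log_div one_ne_zero hy0.ne', Real.log_one]
        ring
      refine pow_le_pow_left₀ (Real.log_nonneg ((one_le_div hy0).2 hy.2.le)) ?_ _
      rw [hlog]
      exact K0_lower hy0 hy1
    have heq := (log_pow_integral _ he (n+1)).2
    linarith
  · have hsplit : ∫ y in Set.Ioi (0:ℝ), (K0 y)^(n+1)
        = (∫ y in Set.Ioc (0:ℝ) 2, (K0 y)^(n+1)) + ∫ y in Set.Ioi (2:ℝ), (K0 y)^(n+1) := by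
      rw [← Set.Ioc_union_Ioi_eq_Ioi (by norm_num : (0:ℝ) ≤ 2)]
      exact setIntegral_union (Set.Ioc_disjoint_Ioi le_rfl) measurableSet_Ioi
        (K0_pow_integrableOn_Ioc n) (K0_pow_integrableOn_Ioi_two n hn)
    have h1 : ∫ y in Set.Ioc (0:ℝ) 2, (K0 y)^(n+1)
        ≤ ∫ y in Set.Ioc (0:ℝ) 2, (Real.log (5/y))^(n+1) :=
      setIntegral_mono_on (K0_pow_integrableOn_Ioc n)
        ((log_pow_integral 5 (by norm_num) (n+1)).1.mono_set
          (fun y hy => ⟨hy.1, by linarith [hy.2]⟩))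
        measurableSet_Ioc fun y hy => pow_le_pow_left₀ (K0_nonneg y) (K0_upper_small hy.1 hy.2) _
    have h2 : ∫ y in Set.Ioc (0:ℝ) 2, (Real.log (5/y))^(n+1)
        ≤ ∫ y in Set.Ioo (0:ℝ) 5, (Real.log (5/y))^(n+1) := by
      refine setIntegral_mono_set (log_pow_integral 5 (by norm_num) (n+1)).1 ?_ ?_
      · filter_upwards [ae_restrict_mem measurableSet_Ioo] with y hy
        exact pow_nonneg (Real.log_nonneg ((one_le_div hy.1).2 (by linarith [hy.2]))) _
      · filter_upwards with y hy using ⟨hy.1, by linarith [hy.2]⟩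
    have h3 : ∫ y in Set.Ioi (2:ℝ), (K0 y)^(n+1) ≤ 1 := by
      refine le_trans (setIntegral_mono_on (K0_pow_integrableOn_Ioi_two n hn) tail_integrable
        measurableSet_Ioi fun y hy => ?_) tail_integral_le_one
      have hy2 : (2:ℝ) ≤ y := le_of_lt hy
      calc (K0 y)^(n+1) ≤ K0 y :=
            pow_le_of_le_one (K0_nonneg y) (K0_lt_one_of_two_le hy2) (Nat.succ_ne_zero n)
        _ ≤ _ := K0_le_of_two_le hy2
    have hfact : (1:ℝ) ≤ (Nat.factorial (n+1) : ℝ) := by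
      exact_mod_cast Nat.one_le_iff_ne_zero.2 (Nat.factorial_ne_zero _)
    have heq := (log_pow_integral 5 (by norm_num) (n+1)).2
    rw [hsplit]
    linarith
end

section
/- Let t ≥ 4 and α ∈ ℝ with |α| ≤ 1/80. Then ln(t(1+α) + √(t²(1+α)² - 1)) = ln(t + √(t²-1)) + β, where β = ln[1 + α·(t/(t+√(t²-1)))·(1 + (2+α)t/(√(t²-1)+√(t²(1+α)²-1)))], and moreover |α|/4 ≤ |β| ≤ 4|α| and |β| ≤ 1/20. -/
lemma log_pert_bounds {α X : ℝ} (hα : |α| ≤ 1/80) (hX1 : 1/2 ≤ X) (hX2 : X ≤ 3/2) :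
    |α| / 4 ≤ |Real.log (1 + α * X)| ∧ |Real.log (1 + α * X)| ≤ 4 * |α| ∧
    |Real.log (1 + α * X)| ≤ 1/20 := by
  rw [abs_le] at hα
  obtain ⟨hα1, hα2⟩ := hα
  rcases le_or_gt 0 α with h0 | h0
  · have hx1 : α / 2 ≤ α * X := by nlinarith
    have hx2 : α * X ≤ 3/2 * α := by nlinarith
    have hpos : 0 < 1 + α * X := by nlinarith
    have hub : Real.log (1 + α * X) ≤ α * X := by
      have := Real.log_le_sub_one_of_pos hpos; linarith
    have hlb : α / 4 ≤ Real.log (1 + α * X) := by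
      have := Real.one_sub_inv_le_log_of_pos hpos
      have h2 : 1 - (1 + α * X)⁻¹ = (α * X) / (1 + α * X) := by
        field_simp
        ring
      rw [h2] at this
      have h3 : α / 4 ≤ (α * X) / (1 + α * X) := by
        rw [div_le_div_iff₀ (by norm_num) hpos]; nlinarith
      linarith
    have hβ0 : 0 ≤ Real.log (1 + α * X) := le_trans (by linarith) hlb
    rw [abs_of_nonneg hβ0, abs_of_nonneg h0]
    refine ⟨by linarith, by linarith, by linarith⟩
  · have hx1 : α * X ≤ α / 2 := by nlinarith
    have hx2 : 3/2 * α ≤ α * X := by nlinarith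
    have hpos : 0 < 1 + α * X := by nlinarith
    have hub : Real.log (1 + α * X) ≤ α / 2 := by
      have := Real.log_le_sub_one_of_pos hpos; linarith
    have hlb : 2 * α ≤ Real.log (1 + α * X) := by
      have := Real.one_sub_inv_le_log_of_pos hpos
      have h2 : 1 - (1 + α * X)⁻¹ = (α * X) / (1 + α * X) := by
        field_simp
        ring
      rw [h2] at this
      have h3 : 2 * α ≤ (α * X) / (1 + α * X) := by
        rw [le_div_iff₀ hpos]
        nlinarith
      linarith
    have hβ0 : Real.log (1 + α * X) ≤ 0 := le_trans hub (by linarith)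
    rw [abs_of_nonpos hβ0, abs_of_neg h0]
    refine ⟨by linarith, by linarith, by linarith⟩

set_option maxHeartbeats 1000000 in
theorem arcosh_perturbation (t α : ℝ) (ht : 4 ≤ t) (hα : |α| ≤ 1 / 80) :
    let β := Real.log (1 + α * (t / (t + Real.sqrt (t ^ 2 - 1))) *
      (1 + (2 + α) * t / (Real.sqrt (t ^ 2 - 1) + Real.sqrt (t ^ 2 * (1 + α) ^ 2 - 1))))
    Real.log (t * (1 + α) + Real.sqrt (t ^ 2 * (1 + α) ^ 2 - 1)) =
      Real.log (t + Real.sqrt (t ^ 2 - 1)) + β ∧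
    |α| / 4 ≤ |β| ∧ |β| ≤ 4 * |α| ∧ |β| ≤ 1 / 20 := by
  intro β
  obtain ⟨hα1, hα2⟩ := abs_le.mp hα
  have ht0 : (0:ℝ) < t := by linarith
  have ht2 : (16:ℝ) ≤ t ^ 2 := by nlinarith
  have h1a : (79:ℝ)/80 ≤ 1 + α := by linarith
  have h1b : 1 + α ≤ 81/80 := by linarith
  have hsqa : ((79:ℝ)/80) ^ 2 ≤ (1 + α) ^ 2 := by nlinarith
  have hsqb : (1 + α) ^ 2 ≤ ((81:ℝ)/80) ^ 2 := by nlinarith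
  have hsqa' : t ^ 2 * ((79:ℝ)/80) ^ 2 ≤ t ^ 2 * (1 + α) ^ 2 :=
    mul_le_mul_of_nonneg_left hsqa (sq_nonneg t)
  have hsqb' : t ^ 2 * (1 + α) ^ 2 ≤ t ^ 2 * ((81:ℝ)/80) ^ 2 :=
    mul_le_mul_of_nonneg_left hsqb (sq_nonneg t)
  set s := Real.sqrt (t ^ 2 - 1) with hs_def
  set s' := Real.sqrt (t ^ 2 * (1 + α) ^ 2 - 1) with hs'_def
  have hs2 : s ^ 2 = t ^ 2 - 1 := Real.sq_sqrt (by nlinarith)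
  have hs'2 : s' ^ 2 = t ^ 2 * (1 + α) ^ 2 - 1 := Real.sq_sqrt (by nlinarith)
  have hs_nn : 0 ≤ s := Real.sqrt_nonneg _
  have hs'_nn : 0 ≤ s' := Real.sqrt_nonneg _
  have hs_lb : 24/25 * t ≤ s := by
    rw [hs_def, show (24/25 * t) = Real.sqrt ((24/25*t)^2) from
      (Real.sqrt_sq (by positivity)).symm]
    exact Real.sqrt_le_sqrt (by nlinarith)
  have hs'_lb : 19/20 * t ≤ s' := by
    rw [hs'_def, show (19/20 * t) = Real.sqrt ((19/20*t)^2) from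
      (Real.sqrt_sq (by positivity)).symm]
    exact Real.sqrt_le_sqrt (by nlinarith)
  have hs_ub : s ≤ t := by
    have h := Real.sqrt_le_sqrt (show t^2 - 1 ≤ t^2 by linarith)
    rwa [Real.sqrt_sq ht0.le, ← hs_def] at h
  have hs'_ub : s' ≤ 81/80 * t := by
    have h := Real.sqrt_le_sqrt (show t^2*(1+α)^2 - 1 ≤ (81/80*t)^2 by nlinarith)
    rwa [Real.sqrt_sq (show (0:ℝ) ≤ 81/80*t by positivity), ← hs'_def] at h
  have hss' : 0 < s + s' := by nlinarith
  have hu : 0 < t + s := by nlinarith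
  have hu' : 0 < t * (1 + α) + s' := by nlinarith
  set X := (t / (t + s)) * (1 + (2 + α) * t / (s + s')) with hX_def
  have hfrac_lb : (1:ℝ)/2 ≤ t / (t + s) := by
    rw [le_div_iff₀ hu]; nlinarith
  have hfrac_ub : t / (t + s) ≤ 25/49 := by
    rw [div_le_iff₀ hu]; nlinarith
  have hA_lb : (1:ℝ) ≤ 1 + (2 + α) * t / (s + s') := by
    have : 0 ≤ (2 + α) * t / (s + s') := div_nonneg (by nlinarith) hss'.le
    linarith
  have hA_ub : 1 + (2 + α) * t / (s + s') ≤ 1 + 161/80 / (191/100) := by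
    have h1 : (2 + α) * t / (s + s') ≤ 161/80 / (191/100) := by
      rw [div_le_div_iff₀ hss' (by norm_num)]
      nlinarith
    linarith
  have hX1 : 1/2 ≤ X := by
    calc (1:ℝ)/2 = 1/2 * 1 := by ring
    _ ≤ X := mul_le_mul hfrac_lb hA_lb (by norm_num)
        (le_trans (by norm_num) hfrac_lb)
  have hX2 : X ≤ 3/2 := by
    calc X ≤ 25/49 * (1 + 161/80 / (191/100)) :=
          mul_le_mul hfrac_ub hA_ub (le_trans (by norm_num) hA_lb)
            (by norm_num)
    _ ≤ 3/2 := by norm_num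
  have hratio : 1 + α * X = (t * (1 + α) + s') / (t + s) := by
    rw [hX_def, eq_div_iff (ne_of_gt hu)]
    field_simp
    linear_combination hs2 - hs'2
  have hβ : β = Real.log (1 + α * X) := by rw [hX_def, hs_def, hs'_def, ← mul_assoc]
  constructor
  · rw [hβ, hratio, Real.log_div (ne_of_gt hu') (ne_of_gt hu)]
    ring
  · rw [hβ]
    exact log_pert_bounds hα hX1 hX2
end

section
/- Let g : [0,1] → [0,1] be a C³ orientation-preserving diffeomorphism with g(0)=0, g(1)=1, g' > 0, and let C = max_{t∈[0,1]} |g''(t)|. Then for any 0 ≤ x_{k-2} < x_{k-1} < x_k ≤ 1 there exist points x*, x** ∈ (0,1) such that (g(x_k)-g(x_{k-2}))/(2√((g(x_k)-g(x_{k-1}))(g(x_{k-1})-g(x_{k-2})))) = ((x_k - x_{k-2})/(2√((x_k-x_{k-1})(x_{k-1}-x_{k-2}))))·(1 + λ(x_k - x_{k-2})) for some real λ with |λ| ≤ 4C/min g', provided C·(x_k - x_{k-2}) is sufficiently small (e.g. < 1/400 · min g'). -/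
open Set

theorem cross_ratio_perturbation (g : ℝ → ℝ)
    (hg : ContDiffOn ℝ 3 g (Icc 0 1)) (hg0 : g 0 = 0) (hg1 : g 1 = 1)
    (hg' : ∀ t ∈ Icc (0:ℝ) 1, 0 < derivWithin g (Icc 0 1) t)
    (C m : ℝ)
    (hC : C = sSup ((fun t => |iteratedDerivWithin 2 g (Icc 0 1) t|) '' Icc 0 1))
    (hm : m = sInf (derivWithin g (Icc 0 1) '' Icc 0 1))
    (a b c : ℝ) (hab : a < b) (hbc : b < c) (ha : 0 ≤ a) (hc : c ≤ 1)
    (hsmall : C * (c - a) < m / 400) :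
    ∃ lam : ℝ, |lam| ≤ 4 * C / m ∧
      (g c - g a) / (2 * Real.sqrt ((g c - g b) * (g b - g a))) =
        ((c - a) / (2 * Real.sqrt ((c - b) * (b - a)))) * (1 + lam * (c - a)) := by
  have hUD : UniqueDiffOn ℝ (Icc (0:ℝ) 1) := uniqueDiffOn_Icc one_pos
  set s : Set ℝ := Icc (0:ℝ) 1 with hsdef
  set g₁ := derivWithin g s with hg₁def
  set g₂ := iteratedDerivWithin 2 g s with hg₂def
  have h0s : (0:ℝ) ∈ s := by simp [hsdef]
  have hsub : Icc a c ⊆ s := Icc_subset_Icc ha hc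
  have hcomp : IsCompact s := isCompact_Icc
  have hg1cd : ContDiffOn ℝ 2 g₁ s := hg.derivWithin hUD (by norm_num)
  have hg1cont : ContinuousOn g₁ s := hg1cd.continuousOn
  have hg2cont : ContinuousOn g₂ s := hg.continuousOn_iteratedDerivWithin (by norm_num) hUD
  -- m facts
  have himgcomp : IsCompact (g₁ '' s) := hcomp.image_of_continuousOn hg1cont
  have hmmem : m ∈ g₁ '' s := hm ▸ himgcomp.sInf_mem ⟨g₁ 0, mem_image_of_mem _ h0s⟩
  have hmle : ∀ t ∈ s, m ≤ g₁ t := fun t ht =>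
    hm ▸ csInf_le himgcomp.bddBelow (mem_image_of_mem _ ht)
  have hmpos : 0 < m := by
    obtain ⟨t, ht, hts⟩ := hmmem
    exact hts ▸ hg' t ht
  -- C facts
  have hCimg : IsCompact ((fun t => |g₂ t|) '' s) :=
    hcomp.image_of_continuousOn hg2cont.abs
  have hCle : ∀ t ∈ s, |g₂ t| ≤ C := fun t ht =>
    hC ▸ le_csSup hCimg.bddAbove (mem_image_of_mem _ ht)
  have hC0 : 0 ≤ C := le_trans (abs_nonneg _) (hCle 0 h0s)
  -- g₁ has derivative g₂ within s
  have hg1deriv : ∀ x ∈ s, HasDerivWithinAt g₁ (g₂ x) s x := by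
    intro x hx
    have h1 : HasDerivWithinAt g₁ (derivWithin g₁ s x) s x :=
      (hg1cd.differentiableOn (by norm_num) x hx).hasDerivWithinAt
    have heq : EqOn (iteratedDerivWithin 1 g s) g₁ s := fun y hy =>
      congrFun iteratedDerivWithin_one y
    have h2 : g₂ x = derivWithin g₁ s x := by
      rw [hg₂def, iteratedDerivWithin_succ, derivWithin_congr heq (heq hx)]
    rwa [← h2] at h1
  -- Lipschitz bound on g₁ over [a,c]
  have hca : 0 < c - a := by linarith
  have hLip : ∀ ξ ∈ Icc a c, ∀ η ∈ Icc a c, |g₁ ξ - g₁ η| ≤ C * (c - a) := by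
    intro ξ hξ η hη
    have h := (convex_Icc (0:ℝ) 1).norm_image_sub_le_of_norm_hasDerivWithin_le
      hg1deriv (fun x hx => by simpa using hCle x hx) (hsub hη) (hsub hξ)
    have hd : |ξ - η| ≤ c - a := by
      rw [abs_sub_le_iff]; constructor <;> [linarith [hξ.2, hη.1]; linarith [hη.2, hξ.1]]
    calc |g₁ ξ - g₁ η| ≤ C * |ξ - η| := by simpa [Real.norm_eq_abs] using h
      _ ≤ C * (c - a) := by exact mul_le_mul_of_nonneg_left hd hC0
  -- mean value theorem helper
  have mvt : ∀ x y : ℝ, a ≤ x → x < y → y ≤ c →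
      ∃ ξ ∈ Ioo x y, g y - g x = g₁ ξ * (y - x) := by
    intro x y hax hxy hyc
    have hcont : ContinuousOn g (Icc x y) :=
      hg.continuousOn.mono (Icc_subset_Icc (le_trans ha hax) (le_trans hyc hc))
    have hder : ∀ t ∈ Ioo x y, HasDerivAt g (g₁ t) t := by
      intro t ht
      have hts : t ∈ Ioo (0:ℝ) 1 :=
        ⟨lt_of_le_of_lt (le_trans ha hax) ht.1, lt_of_lt_of_le ht.2 (le_trans hyc hc)⟩
      have hmem : t ∈ s := ⟨hts.1.le, hts.2.le⟩
      have : HasDerivWithinAt g (g₁ t) s t :=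
        (hg.differentiableOn (by norm_num) t hmem).hasDerivWithinAt
      exact this.hasDerivAt (Icc_mem_nhds hts.1 hts.2)
    obtain ⟨ξ, hξ, hslope⟩ := exists_hasDerivAt_eq_slope g g₁ hxy hcont hder
    exact ⟨ξ, hξ, by field_simp [ne_of_gt (sub_pos.mpr hxy)] at hslope ⊢; linarith⟩
  obtain ⟨ξ3, hξ3, hp⟩ := mvt a c le_rfl (hab.trans hbc) le_rfl
  obtain ⟨ξ1, hξ1, hu⟩ := mvt b c hab.le hbc le_rfl
  obtain ⟨ξ2, hξ2, hv⟩ := mvt a b le_rfl hab hbc.le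
  set p := g₁ ξ3 with hpdef
  set u := g₁ ξ1 with hudef
  set v := g₁ ξ2 with hvdef
  have hξ3m : ξ3 ∈ Icc a c := Ioo_subset_Icc_self hξ3
  have hξ1m : ξ1 ∈ Icc a c := ⟨hab.le.trans hξ1.1.le, hξ1.2.le⟩
  have hξ2m : ξ2 ∈ Icc a c := ⟨hξ2.1.le, hξ2.2.le.trans hbc.le⟩
  have hpm : m ≤ p := hmle ξ3 (hsub hξ3m)
  have hum : m ≤ u := hmle ξ1 (hsub hξ1m)
  have hvm : m ≤ v := hmle ξ2 (hsub hξ2m)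
  have hppos : 0 < p := lt_of_lt_of_le hmpos hpm
  have hupos : 0 < u := lt_of_lt_of_le hmpos hum
  have hvpos : 0 < v := lt_of_lt_of_le hmpos hvm
  set q := Real.sqrt (u * v) with hqdef
  have hqm : m ≤ q := by
    have : m * m ≤ u * v := mul_le_mul hum hvm hmpos.le hupos.le
    calc m = Real.sqrt (m * m) := (Real.sqrt_mul_self hmpos.le).symm
      _ ≤ q := Real.sqrt_le_sqrt this
  have hqpos : 0 < q := lt_of_lt_of_le hmpos hqm
  -- |p - q| ≤ C (c - a)
  have hup : |u - p| ≤ C * (c - a) := hLip ξ1 hξ1m ξ3 hξ3m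
  have hvp : |v - p| ≤ C * (c - a) := hLip ξ2 hξ2m ξ3 hξ3m
  have hpq : |p - q| ≤ C * (c - a) := by
    have h1 : q ≤ max u v := by
      have : u * v ≤ max u v * max u v :=
        mul_le_mul (le_max_left _ _) (le_max_right _ _) hvpos.le
          (le_trans hupos.le (le_max_left _ _))
      calc q ≤ Real.sqrt (max u v * max u v) := Real.sqrt_le_sqrt this
        _ = max u v := Real.sqrt_mul_self (le_trans hupos.le (le_max_left _ _))
    have h2 : min u v ≤ q := by
      have : min u v * min u v ≤ u * v :=
        mul_le_mul (min_le_left _ _) (min_le_right _ _)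
          (le_min hupos.le hvpos.le) hupos.le
      calc min u v = Real.sqrt (min u v * min u v) :=
            (Real.sqrt_mul_self (le_min hupos.le hvpos.le)).symm
        _ ≤ q := Real.sqrt_le_sqrt this
    rw [abs_sub_le_iff] at hup hvp ⊢
    constructor
    · have : p - C * (c - a) ≤ min u v := le_min (by linarith [hup.1]) (by linarith [hvp.1])
      linarith
    · have : max u v ≤ p + C * (c - a) := max_le (by linarith [hup.2]) (by linarith [hvp.2])
      linarith
  refine ⟨(p / q - 1) / (c - a), ?_, ?_⟩
  · -- bound on lambda
    have h1 : |p / q - 1| ≤ C * (c - a) / m := by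
      have he : p / q - 1 = (p - q) / q := by field_simp
      rw [he, abs_div, abs_of_pos hqpos]
      exact div_le_div₀ (by positivity) hpq hmpos hqm
    have h2 : |(p / q - 1) / (c - a)| ≤ C / m := by
      rw [abs_div, abs_of_pos hca]
      calc |p / q - 1| / (c - a) ≤ (C * (c - a) / m) / (c - a) := by gcongr
        _ = C / m := by
          rw [div_div, mul_comm m (c - a), ← div_div, mul_div_assoc,
            div_self hca.ne', mul_one]
    have h5 : C / m ≤ 4 * C / m := by
      gcongr
      linarith
    exact h2.trans h5
  · -- the identity
    have hcb : 0 < c - b := sub_pos.mpr hbc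
    have hba : 0 < b - a := sub_pos.mpr hab
    set r := Real.sqrt ((c - b) * (b - a)) with hrdef
    have hrpos : 0 < r := Real.sqrt_pos.mpr (mul_pos hcb hba)
    have hprod : (g c - g b) * (g b - g a) = u * v * ((c - b) * (b - a)) := by
      rw [hu, hv]; ring
    have hsqrt : Real.sqrt ((g c - g b) * (g b - g a)) = q * r := by
      rw [hprod, Real.sqrt_mul (by positivity)]
    rw [hp, hsqrt]
    have hlam : (p / q - 1) / (c - a) * (c - a) = p / q - 1 := by
      field_simp
    rw [hlam]
    field_simp
    ring
end
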